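/- The function χ(ρ) = (1/(1+ρ²))·(1/ρ² + 6ρ·log((1-ρ)/(1+ρ)) + 9) satisfies the equation u'' + (2/ρ - 2ρ/(1-ρ²))u' - (2cos(2f₀)/(ρ²(1-ρ²)) + 2/(1-ρ²))u = 0 for all ρ ∈ (0,1), where f₀(ρ) = 2·arctan(ρ). -/

import Mathlib

noncomputable def f₀ : ℝ → ℝ := fun ρ => 2 * Real.arctan ρ

noncomputable def χ : ℝ → ℝ :=
  fun ρ => (1 / (1 + ρ^2)) * (1 / ρ^2 + 6 * ρ * Real.log ((1 - ρ) / (1 + ρ)) + 9)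

noncomputable def Lg : ℝ → ℝ := fun x => Real.log ((1 - x) / (1 + x))

noncomputable def D1 : ℝ → ℝ := fun x =>
  (-2*x/(1+x^2)^2) * (1/x^2 + 6*x*Lg x + 9)
    + (1/(1+x^2)) * (-2/x^3 + 6*Lg x - 12*x/(1-x^2))

noncomputable def D2 : ℝ → ℝ := fun x =>
  (-2/(1+x^2)^2 + 8*x^2/(1+x^2)^3) * (1/x^2 + 6*x*Lg x + 9)
    + 2 * (-2*x/(1+x^2)^2) * (-2/x^3 + 6*Lg x - 12*x/(1-x^2))
    + (1/(1+x^2)) * (6/x^4 - 24/(1-x^2) - 24*x^2/(1-x^2)^2)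

section derivs

variable {x : ℝ}

lemma hx_facts (hx : x ∈ Set.Ioo (0:ℝ) 1) :
    x ≠ 0 ∧ (1:ℝ) + x ≠ 0 ∧ (1:ℝ) - x ≠ 0 ∧ (1:ℝ) + x^2 ≠ 0 ∧ (1:ℝ) - x^2 ≠ 0 := by
  obtain ⟨h0, h1⟩ := hx
  refine ⟨ne_of_gt h0, by nlinarith, by nlinarith, by nlinarith, by nlinarith⟩

lemma hasDerivAt_Lg (hx : x ∈ Set.Ioo (0:ℝ) 1) :
    HasDerivAt Lg (-2/(1-x^2)) x := by
  obtain ⟨hx0, hp, hm, hq, hr⟩ := hx_facts hx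
  have hnum : HasDerivAt (fun y : ℝ => 1 - y) (-1) x := by
    simpa using (hasDerivAt_id x).const_sub 1
  have hden : HasDerivAt (fun y : ℝ => 1 + y) 1 x := by
    simpa using (hasDerivAt_id x).const_add 1
  have hdiv := hnum.div hden hp
  have hfrac : (1 - x) / (1 + x) ≠ 0 := div_ne_zero hm hp
  have := hdiv.log hfrac
  refine this.congr_deriv ?_
  simp only [Pi.div_apply]
  field_simp
  all_goals ring

lemma hasDerivAt_A (hx : x ∈ Set.Ioo (0:ℝ) 1) :
    HasDerivAt (fun y : ℝ => 1/(1+y^2)) (-2*x/(1+x^2)^2) x := by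
  obtain ⟨hx0, hp, hm, hq, hr⟩ := hx_facts hx
  have hden : HasDerivAt (fun y : ℝ => 1 + y^2) (2*x) x := by
    simpa using ((hasDerivAt_pow 2 x).const_add 1)
  have := (hasDerivAt_const x (1:ℝ)).div hden hq
  refine this.congr_deriv ?_
  field_simp
  all_goals ring

lemma hasDerivAt_B (hx : x ∈ Set.Ioo (0:ℝ) 1) :
    HasDerivAt (fun y : ℝ => 1/y^2 + 6*y*Lg y + 9)
      (-2/x^3 + 6*Lg x - 12*x/(1-x^2)) x := by
  obtain ⟨hx0, hp, hm, hq, hr⟩ := hx_facts hx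
  have h1 : HasDerivAt (fun y : ℝ => 1/y^2) (-2/x^3) x := by
    have hden : HasDerivAt (fun y : ℝ => y^2) (2*x) x := by
      simpa using hasDerivAt_pow 2 x
    have := (hasDerivAt_const x (1:ℝ)).div hden (pow_ne_zero 2 hx0)
    refine this.congr_deriv ?_
    field_simp
    all_goals ring
  have h2 : HasDerivAt (fun y : ℝ => 6*y*Lg y) (6*Lg x + 6*x*(-2/(1-x^2))) x := by
    have hy : HasDerivAt (fun y : ℝ => 6*y) 6 x := by
      simpa using (hasDerivAt_id x).const_mul 6
    have := hy.mul (hasDerivAt_Lg hx)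
    refine this.congr_deriv ?_
    all_goals ring
  have := (h1.add h2).add_const 9
  refine this.congr_deriv ?_
  field_simp
  all_goals ring

lemma hasDerivAt_χ (hx : x ∈ Set.Ioo (0:ℝ) 1) : HasDerivAt χ (D1 x) x := by
  have := (hasDerivAt_A hx).mul (hasDerivAt_B hx)
  refine this.congr_deriv ?_
  rfl

lemma hasDerivAt_D1 (hx : x ∈ Set.Ioo (0:ℝ) 1) : HasDerivAt D1 (D2 x) x := by
  obtain ⟨hx0, hp, hm, hq, hr⟩ := hx_facts hx
  have hA' : HasDerivAt (fun y : ℝ => -2*y/(1+y^2)^2)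
      (-2/(1+x^2)^2 + 8*x^2/(1+x^2)^3) x := by
    have hnum : HasDerivAt (fun y : ℝ => -2*y) (-2) x := by
      simpa using (hasDerivAt_id x).const_mul (-2)
    have hden : HasDerivAt (fun y : ℝ => (1+y^2)^2) (2*(1+x^2)*(2*x)) x := by
      have h0 : HasDerivAt (fun y : ℝ => 1 + y^2) (2*x) x := by
        simpa using ((hasDerivAt_pow 2 x).const_add 1)
      have := h0.pow 2
      refine this.congr_deriv ?_
      ring
    have := hnum.div hden (pow_ne_zero 2 hq)
    refine this.congr_deriv ?_
    field_simp
    all_goals ring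
  have hB' : HasDerivAt (fun y : ℝ => -2/y^3 + 6*Lg y - 12*y/(1-y^2))
      (6/x^4 - 24/(1-x^2) - 24*x^2/(1-x^2)^2) x := by
    have h1 : HasDerivAt (fun y : ℝ => -2/y^3) (6/x^4) x := by
      have hden : HasDerivAt (fun y : ℝ => y^3) (3*x^2) x := by
        simpa using hasDerivAt_pow 3 x
      have := (hasDerivAt_const x (-2:ℝ)).div hden (pow_ne_zero 3 hx0)
      refine this.congr_deriv ?_
      field_simp
      all_goals ring
    have h2 : HasDerivAt (fun y : ℝ => 6*Lg y) (6*(-2/(1-x^2))) x :=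
      (hasDerivAt_Lg hx).const_mul 6
    have h3 : HasDerivAt (fun y : ℝ => 12*y/(1-y^2))
        ((12*(1-x^2) - 12*x*(-(2*x)))/(1-x^2)^2) x := by
      have hnum : HasDerivAt (fun y : ℝ => 12*y) 12 x := by
        simpa using (hasDerivAt_id x).const_mul 12
      have hden : HasDerivAt (fun y : ℝ => 1 - y^2) (-(2*x)) x := by
        simpa using ((hasDerivAt_pow 2 x).const_sub 1)
      exact hnum.div hden hr
    have := (h1.add h2).sub h3
    refine this.congr_deriv ?_
    field_simp
    all_goals ring
  have hA := hasDerivAt_A hx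
  have hB := hasDerivAt_B hx
  have := hA'.mul hB |>.add (hA.mul hB')
  have heq : D1 = fun y : ℝ =>
      (fun y : ℝ => -2*y/(1+y^2)^2) y * (fun y : ℝ => 1/y^2 + 6*y*Lg y + 9) y
        + (fun y : ℝ => 1/(1+y^2)) y * (fun y : ℝ => -2/y^3 + 6*Lg y - 12*y/(1-y^2)) y := by
    funext y; simp only [D1]
  rw [heq]
  refine this.congr_deriv ?_
  simp only [D2]
  ring

end derivs

lemma cos_eq (ρ : ℝ) : Real.cos (2 * f₀ ρ) = (1 - 6*ρ^2 + ρ^4)/(1+ρ^2)^2 := by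
  have hq : (0:ℝ) < 1 + ρ^2 := by positivity
  have hc : Real.cos (2 * Real.arctan ρ) = (1 - ρ^2)/(1+ρ^2) := by
    rw [Real.cos_two_mul, Real.cos_arctan]
    rw [div_pow, one_pow, Real.sq_sqrt hq.le]
    field_simp
    all_goals ring
  have : (2 : ℝ) * f₀ ρ = 2 * (2 * Real.arctan ρ) := by simp [f₀]
  rw [this, Real.cos_two_mul, hc]
  field_simp
  all_goals ring

theorem chi_solves_lambda_one_eq (ρ : ℝ) (hρ : ρ ∈ Set.Ioo (0:ℝ) 1) :
    deriv (deriv χ) ρ + (2 / ρ - 2 * ρ / (1 - ρ^2)) * deriv χ ρ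
      - (2 * Real.cos (2 * f₀ ρ) / (ρ^2 * (1 - ρ^2)) + 2 / (1 - ρ^2)) * χ ρ = 0 := by
  obtain ⟨hx0, hp, hm, hq, hr⟩ := hx_facts hρ
  have hev : deriv χ =ᶠ[nhds ρ] D1 := by
    filter_upwards [isOpen_Ioo.mem_nhds hρ] with y hy
    exact (hasDerivAt_χ hy).deriv
  have h2 : deriv (deriv χ) ρ = D2 ρ := by
    rw [hev.deriv_eq]
    exact (hasDerivAt_D1 hρ).deriv
  have h1 : deriv χ ρ = D1 ρ := (hasDerivAt_χ hρ).deriv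
  rw [h1, h2, cos_eq]
  simp only [D1, D2, χ, Lg]
  field_simp
  all_goals ring
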